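/- arXiv:2006.02248 — 2 statements merged into one kernel-verified Lean document; each statement's English description precedes it below -/
import Mathlib

section
/- Let A be a g-tuple of d×d real symmetric matrices that is unitarily equivalent to a direct sum ⊕_{j=1}^ℓ A^j with A^j ∈ SM_{d_j}(ℝ)^g. If X ∈ D_A(n) is an Arveson extreme point of D_A, then gn ≤ Σ_{j=1}^ℓ d_j · k^j_{A,X}, where k^j_{A,X} = dim ker L_{A^j}(X). -/
open Matrix
open scoped Kronecker

/-- The monic linear pencil `L_A(X) = I - Σ_i A_i ⊗ X_i`. -/
noncomputable def LA {g : ℕ} {D m : Type*} [Fintype D] [Fintype m] [DecidableEq D] [DecidableEq m]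
    (A : Fin g → Matrix D D ℝ) (X : Fin g → Matrix m m ℝ) :
    Matrix (D × m) (D × m) ℝ :=
  1 - ∑ i, A i ⊗ₖ X i

/-- Membership of the symmetric tuple `X` in the free spectrahedron `D_A`. -/
def InDA {g : ℕ} {D m : Type*} [Fintype D] [Fintype m] [DecidableEq D] [DecidableEq m]
    (A : Fin g → Matrix D D ℝ) (X : Fin g → Matrix m m ℝ) : Prop :=
  (∀ i, (X i).IsSymm) ∧ (LA A X).PosSemidef

/-- `X` is an Arveson extreme point of `D_A`: every dilation `[[X,β],[βᵀ,γ]] ∈ D_A`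
forces `β = 0`. -/
def IsArvExt {g d n : ℕ} (A : Fin g → Matrix (Fin d) (Fin d) ℝ)
    (X : Fin g → Matrix (Fin n) (Fin n) ℝ) : Prop :=
  InDA A X ∧ ∀ (k : ℕ) (β : Fin g → Matrix (Fin n) (Fin k) ℝ)
    (γ : Fin g → Matrix (Fin k) (Fin k) ℝ),
      InDA A (fun i => Matrix.fromBlocks (X i) (β i) (β i)ᵀ (γ i)) → β = 0

section helpers

lemma mulVec_dot_le {ι κ : Type*} [Fintype ι] [Fintype κ]
    (M : Matrix ι κ ℝ) (y : κ → ℝ) :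
    (M *ᵥ y) ⬝ᵥ (M *ᵥ y) ≤ (∑ i, ∑ j, (M i j)^2) * (y ⬝ᵥ y) := by
  simp only [dotProduct, mulVec, Finset.sum_mul]
  refine Finset.sum_le_sum fun i _ => ?_
  rw [← Finset.sum_mul, ← Finset.sum_mul]
  have h := Finset.sum_mul_sq_le_sq_mul_sq Finset.univ (fun j => M i j) y
  calc (∑ j, M i j * y j) * (∑ j, M i j * y j)
      = (∑ j, M i j * y j)^2 := (sq _).symm
    _ ≤ (∑ j, (M i j)^2) * (∑ j, (y j)^2) := h
    _ = (∑ j, (M i j)^2) * ∑ k, y k * y k := by simp [sq]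

lemma dot_self_nonneg' {ι : Type*} [Fintype ι] (v : ι → ℝ) : 0 ≤ v ⬝ᵥ v := by
  simpa using dotProduct_star_self_nonneg v

lemma psd_dilation {ι κ : Type*} [Fintype ι] [Fintype κ] [DecidableEq ι] [DecidableEq κ]
    (P : Matrix ι ι ℝ) (hP : P.PosSemidef) (C : Matrix ι κ ℝ) :
    ∃ t : ℝ, 0 < t ∧
      (fromBlocks P (t • (P * C)) (t • (P * C))ᵀ (1 : Matrix κ κ ℝ)).PosSemidef := by
  obtain ⟨R, hR⟩ : ∃ R : Matrix ι ι ℝ, P = Rᴴ * R := by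
    open scoped MatrixOrder in
    obtain ⟨X, hX, -, hXX⟩ := CFC.exists_sqrt_of_isSelfAdjoint_of_quasispectrumRestricts
      hP.isHermitian (QuasispectrumRestricts.nnreal_of_nonneg hP.nonneg)
    exact ⟨X, by rw [← hXX, ← star_eq_conjTranspose, hX.star_eq]⟩
  rw [conjTranspose_eq_transpose_of_trivial] at hR
  set S : Matrix κ ι ℝ := (R * C)ᵀ with hS
  set K : ℝ := ∑ i, ∑ j, (S i j)^2 with hK
  have hK0 : 0 ≤ K := Finset.sum_nonneg fun i _ => Finset.sum_nonneg fun j _ => sq_nonneg _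
  refine ⟨(K + 1)⁻¹, by positivity, ?_⟩
  have h1 : (fromBlocks P ((K+1)⁻¹ • (P * C)) ((K+1)⁻¹ • (P * C))ᵀ (1 : Matrix κ κ ℝ))
      = fromBlocks P ((K+1)⁻¹ • (P * C)) ((K+1)⁻¹ • (P * C))ᴴ (1 : Matrix κ κ ℝ) := by
    rw [conjTranspose_eq_transpose_of_trivial]
  haveI : Invertible (1 : Matrix κ κ ℝ) := invertibleOne
  rw [h1, Matrix.PosDef.fromBlocks₂₂ _ _ Matrix.PosDef.one]
  have hPt : Pᵀ = P := hP.1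
  have key : P - ((K+1)⁻¹ • (P * C)) * (1 : Matrix κ κ ℝ)⁻¹ * ((K+1)⁻¹ • (P * C))ᴴ
      = P - ((K+1)⁻¹ * (K+1)⁻¹) • (P * C * (Cᵀ * P)) := by
    rw [inv_one, Matrix.mul_one, conjTranspose_eq_transpose_of_trivial, transpose_smul,
      Matrix.smul_mul, Matrix.mul_smul, smul_smul, Matrix.transpose_mul, hPt, Matrix.mul_assoc]
  rw [key]
  have hM : (P * C * (Cᵀ * P)).IsHermitian := by
    have e : P * C * (Cᵀ * P) = (P * C) * (P * C)ᴴ := by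
      rw [conjTranspose_eq_transpose_of_trivial, Matrix.transpose_mul, hPt]
    rw [e]; exact Matrix.isHermitian_mul_conjTranspose_self _
  refine Matrix.PosSemidef.of_dotProduct_mulVec_nonneg ?_ ?_
  · refine Matrix.IsHermitian.sub hP.1 ?_
    rw [Matrix.IsHermitian, Matrix.conjTranspose_smul, hM.eq, star_trivial]
  · intro x
    rw [star_trivial]
    have hPx : x ⬝ᵥ (P *ᵥ x) = (R *ᵥ x) ⬝ᵥ (R *ᵥ x) := by
      rw [hR, ← Matrix.mulVec_mulVec, Matrix.dotProduct_mulVec, Matrix.vecMul_transpose]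
    have hQx : x ⬝ᵥ ((P * C * (Cᵀ * P)) *ᵥ x) = (S *ᵥ (R *ᵥ x)) ⬝ᵥ (S *ᵥ (R *ᵥ x)) := by
      have e1 : (P * C * (Cᵀ * P)) *ᵥ x = (P * C) *ᵥ ((Cᵀ * P) *ᵥ x) := by
        rw [Matrix.mulVec_mulVec]
      have e2 : (Cᵀ * P) *ᵥ x = S *ᵥ (R *ᵥ x) := by
        rw [hS, Matrix.transpose_mul, hR]
        rw [← Matrix.mulVec_mulVec, ← Matrix.mulVec_mulVec, ← Matrix.mulVec_mulVec]
      have e3 : x ⬝ᵥ ((P * C) *ᵥ ((Cᵀ * P) *ᵥ x)) = ((P*C)ᵀ *ᵥ x) ⬝ᵥ ((Cᵀ * P) *ᵥ x) := by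
        rw [Matrix.dotProduct_mulVec, Matrix.mulVec_transpose]
      have e4 : (P*C)ᵀ *ᵥ x = (Cᵀ * P) *ᵥ x := by rw [Matrix.transpose_mul, hPt]
      rw [e1, e3, e4, e2]
    rw [Matrix.sub_mulVec, dotProduct_sub, Matrix.smul_mulVec,
      dotProduct_smul, hPx, hQx]
    have hb := mulVec_dot_le S (R *ᵥ x)
    rw [← hK] at hb
    have hz : 0 ≤ (R *ᵥ x) ⬝ᵥ (R *ᵥ x) := dot_self_nonneg' _
    have ht : ((K+1)⁻¹ * (K+1)⁻¹) * K ≤ 1 := by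
      have h2 : (0:ℝ) < K + 1 := by linarith
      have e : ((K+1)⁻¹ * (K+1)⁻¹) * K = K / ((K+1)*(K+1)) := by field_simp
      rw [e, div_le_one (by positivity)]
      nlinarith
    have hmul := mul_le_mul_of_nonneg_left hb
      (le_of_lt (by positivity : (0:ℝ) < (K+1)⁻¹ * (K+1)⁻¹))
    simp only [smul_eq_mul]
    nlinarith [hmul, ht, hz]

lemma factor_lin {V W : Type*} [AddCommGroup V] [Module ℝ V] [AddCommGroup W] [Module ℝ W]
    [FiniteDimensional ℝ V] (f : V →ₗ[ℝ] V) (g : V →ₗ[ℝ] W)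
    (h : LinearMap.ker f ≤ LinearMap.ker g) : ∃ h' : V →ₗ[ℝ] W, g = h' ∘ₗ f := by
  obtain ⟨q, hq⟩ := Submodule.exists_isCompl (LinearMap.range f)
  let π := Submodule.linearProjOfIsCompl _ _ hq
  let e := f.quotKerEquivRange
  let gbar : (V ⧸ LinearMap.ker f) →ₗ[ℝ] W := (LinearMap.ker f).liftQ g h
  refine ⟨gbar ∘ₗ (e.symm : LinearMap.range f →ₗ[ℝ] (V ⧸ LinearMap.ker f)) ∘ₗ π, ?_⟩
  ext v
  have h1 : π (f v) = ⟨f v, LinearMap.mem_range_self f v⟩ :=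
    Submodule.linearProjOfIsCompl_apply_left hq ⟨f v, LinearMap.mem_range_self f v⟩
  have h2 : e.symm ⟨f v, LinearMap.mem_range_self f v⟩ = Submodule.Quotient.mk v :=
    f.quotKerEquivRange_symm_apply_image v (LinearMap.mem_range_self f v)
  simp only [LinearMap.comp_apply, LinearEquiv.coe_coe, h1, h2]
  rfl

lemma factor_matrix {ι κ : Type*} [Fintype ι] [Fintype κ] [DecidableEq ι]
    (P : Matrix ι ι ℝ) (hPt : Pᵀ = P) (Λ : Matrix κ ι ℝ)
    (h : ∀ v, P *ᵥ v = 0 → Λ *ᵥ v = 0) : ∃ C : Matrix ι κ ℝ, Λᵀ = P * C := by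
  obtain ⟨h', hh'⟩ := factor_lin P.mulVecLin Λ.mulVecLin (by
    intro v hv
    rw [LinearMap.mem_ker] at *
    exact h v hv)
  let E := LinearMap.toMatrix' h'
  have hE : Λ = E * P := by
    have h3 : Λ.mulVecLin = (E * P).mulVecLin := by
      rw [Matrix.mulVecLin_mul, hh']
      congr 1
      rw [← Matrix.toLin'_apply', Matrix.toLin'_toMatrix']
    have h4 : Matrix.toLin' Λ = Matrix.toLin' (E * P) := by
      rw [Matrix.toLin'_apply', Matrix.toLin'_apply', h3]
    exact Matrix.toLin'.injective h4
  refine ⟨Eᵀ, ?_⟩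
  rw [hE, Matrix.transpose_mul, hPt]

lemma sum_mulVec' {σ ι κ : Type*} [Fintype κ] (s : Finset σ)
    (M : σ → Matrix ι κ ℝ) (v : κ → ℝ) :
    (∑ i ∈ s, M i) *ᵥ v = ∑ i ∈ s, (M i *ᵥ v) := by
  ext x
  simp only [mulVec, dotProduct, Finset.sum_apply, Matrix.sum_apply, Finset.sum_mul]
  rw [Finset.sum_comm]

lemma bd_kron_mulVec {ℓ : ℕ} {dd : Fin ℓ → ℕ} {m₁ m₂ : Type*} [Fintype m₁] [Fintype m₂]
    (M : ∀ j, Matrix (Fin (dd j)) (Fin (dd j)) ℝ) (Y : Matrix m₁ m₂ ℝ)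
    (v : ((j : Fin ℓ) × Fin (dd j)) × m₂ → ℝ) (j : Fin ℓ) (p : Fin (dd j)) (q : m₁) :
    ((blockDiagonal' M ⊗ₖ Y) *ᵥ v) (⟨j, p⟩, q)
      = ((M j ⊗ₖ Y) *ᵥ fun pr => v (⟨j, pr.1⟩, pr.2)) (p, q) := by
  simp only [mulVec, dotProduct, Fintype.sum_prod_type, kroneckerMap_apply]
  rw [← Finset.univ_sigma_univ, Finset.sum_sigma]
  rw [Finset.sum_eq_single j]
  · congr 1
    ext p'
    congr 1
    ext q'
    rw [Matrix.blockDiagonal'_apply_eq]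
  · intro j' _ hj'
    refine Finset.sum_eq_zero fun p' _ => Finset.sum_eq_zero fun q' _ => ?_
    rw [Matrix.blockDiagonal'_apply_ne _ _ _ (Ne.symm hj')]
    ring
  · intro hj
    exact absurd (Finset.mem_univ j) hj

end helpers

/-- if `A` is unitarily equivalent to `⊕_j A^j` and `X` is an Arveson
extreme point of `D_A(n)`, then `gn ≤ Σ_j d_j · dim ker L_{A^j}(X)`. -/
theorem arveson_kernel_count_direct_sum {g d n ℓ : ℕ}
    (A : Fin g → Matrix (Fin d) (Fin d) ℝ) (hA : ∀ i, (A i).IsSymm)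
    (dd : Fin ℓ → ℕ)
    (Aj : ∀ j : Fin ℓ, Fin g → Matrix (Fin (dd j)) (Fin (dd j)) ℝ)
    (hAj : ∀ j i, ((Aj j) i).IsSymm)
    (U : Matrix (Fin d) ((j : Fin ℓ) × Fin (dd j)) ℝ)
    (hU1 : Uᵀ * U = 1) (hU2 : U * Uᵀ = 1)
    (hUA : ∀ i, Uᵀ * A i * U = Matrix.blockDiagonal' (fun j => Aj j i))
    (X : Fin g → Matrix (Fin n) (Fin n) ℝ) (hX : IsArvExt A X) :
    g * n ≤ ∑ j, dd j * Module.finrank ℝ (LinearMap.ker (LA (Aj j) X).mulVecLin) := by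
  classical
  set P : Matrix (Fin d × Fin n) (Fin d × Fin n) ℝ := LA A X with hPdef
  have hPpsd : P.PosSemidef := hX.1.2
  have hPt : Pᵀ = P := by
    rw [← conjTranspose_eq_transpose_of_trivial]; exact hPpsd.1
  set Dm : Fin g → Matrix ((j : Fin ℓ) × Fin (dd j)) ((j : Fin ℓ) × Fin (dd j)) ℝ :=
    fun i => blockDiagonal' (fun j => Aj j i) with hDm
  have hAiU : ∀ i, A i * U = U * Dm i := by
    intro i
    have h1 : U * (Uᵀ * A i * U) = U * Dm i := by rw [hUA]
    calc A i * U = (U * Uᵀ) * (A i * U) := by rw [hU2, Matrix.one_mul]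
      _ = U * (Uᵀ * A i * U) := by noncomm_ring [Matrix.mul_assoc]
      _ = U * Dm i := h1
  -- the linear map Ψ
  let lam : ∀ j : Fin ℓ, (Fin g → Matrix (Fin n) (Fin 1) ℝ) →
      Matrix (Fin (dd j) × Fin 1) (Fin (dd j) × Fin n) ℝ :=
    fun j β => ∑ i, (Aj j i) ⊗ₖ (β i)ᵀ
  let Ψ : (Fin g → Matrix (Fin n) (Fin 1) ℝ) →ₗ[ℝ]
      (∀ j : Fin ℓ, (LinearMap.ker (LA (Aj j) X).mulVecLin) →ₗ[ℝ] (Fin (dd j) × Fin 1 → ℝ)) :=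
    { toFun := fun β j => ((lam j β).mulVecLin).domRestrict _
      map_add' := by
        intro β β'
        funext j
        ext w
        have hl : lam j (β + β') = lam j β + lam j β' := by
          simp [lam, Pi.add_apply, Matrix.transpose_add, Matrix.kronecker_add,
            Finset.sum_add_distrib]
        simp [hl, Matrix.mulVecLin_add]
      map_smul' := by
        intro c β
        funext j
        ext w
        have hl : lam j (c • β) = c • lam j β := by
          simp [lam, Pi.smul_apply, Matrix.transpose_smul, Matrix.kronecker_smul,
            Finset.smul_sum]
        simp [hl, Matrix.mulVecLin_apply, Matrix.smul_mulVec] }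
  -- injectivity
  have hinj : Function.Injective Ψ := by
    rw [injective_iff_map_eq_zero]
    intro β hβ
    -- the per-block vanishing
    have hblock : ∀ j : Fin ℓ, ∀ w : Fin (dd j) × Fin n → ℝ,
        (LA (Aj j) X) *ᵥ w = 0 → (lam j β) *ᵥ w = 0 := by
      intro j w hw
      have := congrFun (congrArg (fun f => f j) hβ) -- not usable directly
      have h1 : ((lam j β).mulVecLin).domRestrict (LinearMap.ker (LA (Aj j) X).mulVecLin)
          = 0 := congrFun hβ j
      have h2 := congrArg (fun f => f ⟨w, by simpa [LinearMap.mem_ker,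
        Matrix.mulVecLin_apply] using hw⟩) h1
      simpa [Matrix.mulVecLin_apply] using h2
    -- global kernel vanishing
    set Λ : Matrix (Fin d × Fin 1) (Fin d × Fin n) ℝ := ∑ i, (A i) ⊗ₖ (β i)ᵀ with hΛ
    have hPfact : P = (U ⊗ₖ (1 : Matrix (Fin n) (Fin n) ℝ)) * (LA Dm X)
        * (Uᵀ ⊗ₖ (1 : Matrix (Fin n) (Fin n) ℝ)) := by
      rw [hPdef]
      unfold LA
      rw [Matrix.mul_sub, Matrix.sub_mul, Matrix.mul_one, Matrix.mul_sum, Matrix.sum_mul]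
      congr 1
      · rw [← Matrix.mul_kronecker_mul, hU2, Matrix.one_mul, Matrix.one_kronecker_one]
      · refine Finset.sum_congr rfl fun i _ => ?_
        rw [← Matrix.mul_kronecker_mul, ← Matrix.mul_kronecker_mul, Matrix.one_mul,
          Matrix.mul_one]
        have hAi : A i = U * Dm i * Uᵀ := by
          calc A i = (A i * U) * Uᵀ := by rw [Matrix.mul_assoc, hU2, Matrix.mul_one]
            _ = U * Dm i * Uᵀ := by rw [hAiU]
        rw [hAi]
    have hUU1 : (Uᵀ ⊗ₖ (1 : Matrix (Fin n) (Fin n) ℝ)) * (U ⊗ₖ (1 : Matrix (Fin n) (Fin n) ℝ))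
        = (1 : Matrix (((j : Fin ℓ) × Fin (dd j)) × Fin n) (((j : Fin ℓ) × Fin (dd j)) × Fin n) ℝ) := by
      rw [← Matrix.mul_kronecker_mul, hU1, Matrix.one_mul, Matrix.one_kronecker_one]
    have hUU2 : (U ⊗ₖ (1 : Matrix (Fin n) (Fin n) ℝ)) * (Uᵀ ⊗ₖ (1 : Matrix (Fin n) (Fin n) ℝ))
        = (1 : Matrix ((Fin d) × Fin n) ((Fin d) × Fin n) ℝ) := by
      rw [← Matrix.mul_kronecker_mul, hU2, Matrix.one_mul, Matrix.one_kronecker_one]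
    have hker : ∀ v, P *ᵥ v = 0 → Λ *ᵥ v = 0 := by
      intro v hv
      set w : ((j : Fin ℓ) × Fin (dd j)) × Fin n → ℝ :=
        (Uᵀ ⊗ₖ (1 : Matrix (Fin n) (Fin n) ℝ)) *ᵥ v with hw
      have hvw : v = (U ⊗ₖ (1 : Matrix (Fin n) (Fin n) ℝ)) *ᵥ w := by
        rw [hw, Matrix.mulVec_mulVec, hUU2, Matrix.one_mulVec]
      have hQw : (LA Dm X) *ᵥ w = 0 := by
        have e1 : P *ᵥ v = (U ⊗ₖ (1 : Matrix (Fin n) (Fin n) ℝ)) *ᵥ ((LA Dm X) *ᵥ w) := by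
          rw [hPfact, hw, Matrix.mulVec_mulVec, Matrix.mulVec_mulVec, Matrix.mul_assoc]
        have e2 : (Uᵀ ⊗ₖ (1 : Matrix (Fin n) (Fin n) ℝ)) *ᵥ (P *ᵥ v) = (LA Dm X) *ᵥ w := by
          rw [e1, Matrix.mulVec_mulVec, hUU1, Matrix.one_mulVec]
        rw [← e2, hv, Matrix.mulVec_zero]
      have hwj : ∀ j : Fin ℓ,
          (LA (Aj j) X) *ᵥ (fun pq : Fin (dd j) × Fin n => w (⟨j, pq.1⟩, pq.2)) = 0 := by
        intro j
        funext pq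
        obtain ⟨p, q⟩ := pq
        have := congrFun hQw (⟨j, p⟩, q)
        unfold LA at this ⊢
        rw [Matrix.sub_mulVec, sum_mulVec'] at this ⊢
        simp only [Pi.sub_apply, Matrix.one_mulVec, Finset.sum_apply, Pi.zero_apply] at this ⊢
        rw [show (0:ℝ) = w (⟨j,p⟩, q) - ∑ i, ((Dm i ⊗ₖ X i) *ᵥ w) (⟨j,p⟩,q) from this.symm]
        congr 1
        refine Finset.sum_congr rfl fun i _ => ?_
        exact (bd_kron_mulVec (fun j' => Aj j' i) (X i) w j p q).symm
      -- now assemble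
      have hcomm : Λ * (U ⊗ₖ (1 : Matrix (Fin n) (Fin n) ℝ))
          = (U ⊗ₖ (1 : Matrix (Fin 1) (Fin 1) ℝ)) * (∑ i, (Dm i) ⊗ₖ (β i)ᵀ) := by
        rw [hΛ, Matrix.sum_mul, Matrix.mul_sum]
        refine Finset.sum_congr rfl fun i _ => ?_
        rw [← Matrix.mul_kronecker_mul, ← Matrix.mul_kronecker_mul, Matrix.one_mul,
          Matrix.mul_one, hAiU]
      have hzero : (∑ i, (Dm i) ⊗ₖ (β i)ᵀ) *ᵥ w = 0 := by
        funext x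
        obtain ⟨⟨j, p⟩, r⟩ := x
        rw [sum_mulVec']
        simp only [Finset.sum_apply, Pi.zero_apply]
        have : ∀ i, ((Dm i ⊗ₖ (β i)ᵀ) *ᵥ w) (⟨j, p⟩, r)
            = ((Aj j i ⊗ₖ (β i)ᵀ) *ᵥ fun pq : Fin (dd j) × Fin n => w (⟨j, pq.1⟩, pq.2)) (p, r) :=
          fun i => bd_kron_mulVec (fun j' => Aj j' i) ((β i)ᵀ) w j p r
        rw [Finset.sum_congr rfl fun i _ => this i]
        have h4 : (lam j β) *ᵥ (fun pq : Fin (dd j) × Fin n => w (⟨j, pq.1⟩, pq.2)) = 0 :=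
          hblock j _ (hwj j)
        have h5 := congrFun h4 (p, r)
        rw [sum_mulVec'] at h5
        simpa [Finset.sum_apply] using h5
      rw [hvw, Matrix.mulVec_mulVec, hcomm, ← Matrix.mulVec_mulVec, hzero, Matrix.mulVec_zero]
    -- factor and dilate
    obtain ⟨C, hC⟩ := factor_matrix P hPt (-Λ) (by
      intro v hv
      rw [Matrix.neg_mulVec, hker v hv, neg_zero])
    have hPC : P * C = - Λᵀ := by rw [← hC, Matrix.transpose_neg]
    obtain ⟨t, ht, hpsd⟩ := psd_dilation P hPpsd C
    -- the dilated tuple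
    set Y : Fin g → Matrix (Fin n ⊕ Fin 1) (Fin n ⊕ Fin 1) ℝ :=
      fun i => Matrix.fromBlocks (X i) (t • β i) (t • β i)ᵀ (0 : Matrix (Fin 1) (Fin 1) ℝ)
        with hY
    have hsub : LA A Y = (fromBlocks P (t • (P * C)) (t • (P * C))ᵀ
          (1 : Matrix (Fin d × Fin 1) (Fin d × Fin 1) ℝ)).submatrix
        (fun x => (Equiv.prodSumDistrib (Fin d) (Fin n) (Fin 1)) x)
        (fun x => (Equiv.prodSumDistrib (Fin d) (Fin n) (Fin 1)) x) := by
      have he1 : ∀ (a : Fin d) (q : Fin n),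
          (Equiv.prodSumDistrib (Fin d) (Fin n) (Fin 1)) (a, Sum.inl q) = Sum.inl (a, q) :=
        fun _ _ => rfl
      have he2 : ∀ (a : Fin d) (r : Fin 1),
          (Equiv.prodSumDistrib (Fin d) (Fin n) (Fin 1)) (a, Sum.inr r) = Sum.inr (a, r) :=
        fun _ _ => rfl
      have hPentry : ∀ a q b q', P (a, q) (b, q')
          = (if a = b ∧ q = q' then (1:ℝ) else 0) - ∑ x, A x a b * X x q q' := by
        intro a q b q'
        rw [hPdef]
        unfold LA
        simp [Matrix.sub_apply, Matrix.one_apply, Matrix.sum_apply, kroneckerMap_apply,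
          Prod.ext_iff]
      ext ⟨a, s⟩ ⟨b, s'⟩
      unfold LA
      rcases s with q | r <;> rcases s' with q' | r' <;>
        simp only [Matrix.sub_apply, Matrix.one_apply, Matrix.sum_apply, kroneckerMap_apply,
          Matrix.submatrix_apply, hY, hPC, hΛ, Matrix.neg_apply, Matrix.transpose_apply,
          Matrix.smul_apply, smul_eq_mul, Prod.ext_iff, Sum.inl.injEq, Sum.inr.injEq,
          he1, he2, Matrix.fromBlocks_apply₁₁, Matrix.fromBlocks_apply₁₂,
          Matrix.fromBlocks_apply₂₁, Matrix.fromBlocks_apply₂₂]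
      · rw [hPentry]
      · -- top-right
        simp only [reduceCtorEq, and_false, if_false, zero_sub, mul_neg, neg_inj,
          ← Finset.mul_sum, Finset.mul_sum]
        refine Finset.sum_congr rfl fun i _ => ?_
        rw [(hA i).apply a b]
        ring
      · -- bottom-left
        simp only [reduceCtorEq, and_false, if_false, zero_sub, mul_neg, neg_inj,
          Finset.mul_sum]
        refine Finset.sum_congr rfl fun i _ => ?_
        ring
      · simp [Prod.ext_iff]
    -- PSD of the dilation
    have hYpsd : (LA A Y).PosSemidef := by
      rw [hsub]
      exact hpsd.submatrix _
    have hYsymm : ∀ i, (Y i).IsSymm := by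
      intro i
      unfold Matrix.IsSymm
      rw [hY]
      simp only [Matrix.fromBlocks_transpose, Matrix.transpose_transpose,
        Matrix.transpose_zero, (hX.1.1 i).eq]
    have hβ0 : (fun i => t • β i) = 0 :=
      hX.2 1 (fun i => t • β i) (fun _ => (0 : Matrix (Fin 1) (Fin 1) ℝ)) ⟨hYsymm, hYpsd⟩
    funext i
    have := congrFun hβ0 i
    simp only [Pi.zero_apply] at this
    rcases smul_eq_zero.mp this with h | h
    · exact absurd h (ne_of_gt ht)
    · simp [h]
  -- dimension count
  have hle := LinearMap.finrank_le_finrank_of_injective hinj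
  have hdom : Module.finrank ℝ (Fin g → Matrix (Fin n) (Fin 1) ℝ) = g * n := by
    rw [Module.finrank_pi_fintype]
    simp [Module.finrank_matrix, Finset.sum_const, Fintype.card_fin, mul_comm]
  have hcod : Module.finrank ℝ
      (∀ j : Fin ℓ, (LinearMap.ker (LA (Aj j) X).mulVecLin) →ₗ[ℝ] (Fin (dd j) × Fin 1 → ℝ))
      = ∑ j, Module.finrank ℝ (LinearMap.ker (LA (Aj j) X).mulVecLin) * dd j := by
    rw [Module.finrank_pi_fintype]
    refine Finset.sum_congr rfl fun j _ => ?_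
    rw [Module.finrank_linearMap]
    congr 1
    simp [Module.finrank_pi, Fintype.card_prod]
  rw [hdom, hcod] at hle
  calc g * n ≤ ∑ j, Module.finrank ℝ (LinearMap.ker (LA (Aj j) X).mulVecLin) * dd j := hle
    _ = ∑ j, dd j * Module.finrank ℝ (LinearMap.ker (LA (Aj j) X).mulVecLin) := by
        exact Finset.sum_congr rfl fun j _ => mul_comm _ _
end

section
/- Let X ∈ D_A(n) where D_A is a free spectrahedron, suppose Y ∈ D_A(n+k) is an Arveson extreme dilation of X (i.e., the top-left n×n block of Y is X), and suppose U is an orthogonal matrix with U^T Y U = ⊕_{i=1}^ℓ Z^i where each Z^i is irreducible. Then each Z^i is a free extreme point of D_A, and X is a matrix convex combination of the Z^i: there exist matrices V_i with X = Σ_i V_i^T Z^i V_i and Σ_i V_i^T V_i = I_n, and the sum of the sizes of the Z^i equals n+k. -/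
open Matrix
open scoped Kronecker

/-- The orthogonal complement of a subspace of `m → ℝ` with respect to the
standard dot product. -/
def perpSpace {m : Type*} [Fintype m] (N : Submodule ℝ (m → ℝ)) :
    Submodule ℝ (m → ℝ) where
  carrier := {v | ∀ w ∈ N, dotProduct v w = 0}
  zero_mem' := by intro w hw; simp
  add_mem' := by
    intro a b ha hb w hw
    simp [add_dotProduct, ha w hw, hb w hw]
  smul_mem' := by
    intro c a ha w hw
    simp [smul_dotProduct, ha w hw]

/-- `N` is a reducing subspace for the matrix `M`: both `N` and `N^⊥` are invariant. -/
def IsReducing {m : Type*} [Fintype m] (M : Matrix m m ℝ) (N : Submodule ℝ (m → ℝ)) :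
    Prop :=
  (∀ v ∈ N, M.mulVec v ∈ N) ∧ (∀ v ∈ perpSpace N, M.mulVec v ∈ perpSpace N)

/-- The tuple `X` is irreducible over `ℝ`: the `X i` have no common reducing subspace
other than `⊥` and `⊤`. -/
def IsIrred {g : ℕ} {m : Type*} [Fintype m] (X : Fin g → Matrix m m ℝ) : Prop :=
  ∀ N : Submodule ℝ (m → ℝ), (∀ i, IsReducing (X i) N) → N = ⊥ ∨ N = ⊤

/-! ### Auxiliary lemmas -/

section auxLemmas
set_option linter.unusedSectionVars false

variable {g : ℕ} {D p q : Type*} [Fintype D] [Fintype p] [Fintype q]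
  [DecidableEq D] [DecidableEq p] [DecidableEq q]

private lemma kron_one_transpose (V : Matrix p q ℝ) :
    ((1 : Matrix D D ℝ) ⊗ₖ V)ᵀ = (1 : Matrix D D ℝ) ⊗ₖ Vᵀ := by
  rw [← Matrix.kroneckerMap_transpose, Matrix.transpose_one]

private lemma kron_conj (B : Matrix D D ℝ) (M : Matrix p p ℝ) (V : Matrix p q ℝ) :
    ((1 : Matrix D D ℝ) ⊗ₖ V)ᵀ * (B ⊗ₖ M) * ((1 : Matrix D D ℝ) ⊗ₖ V)
      = B ⊗ₖ (Vᵀ * M * V) := by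
  rw [kron_one_transpose, ← Matrix.mul_kronecker_mul, ← Matrix.mul_kronecker_mul,
    Matrix.one_mul, Matrix.mul_one]

private lemma LA_congr (A : Fin g → Matrix D D ℝ) (X : Fin g → Matrix p p ℝ)
    (V : Matrix p q ℝ) (hV : Vᵀ * V = 1) :
    LA A (fun i => Vᵀ * X i * V)
      = ((1 : Matrix D D ℝ) ⊗ₖ V)ᵀ * LA A X * ((1 : Matrix D D ℝ) ⊗ₖ V) := by
  unfold LA
  rw [Matrix.mul_sub, Matrix.sub_mul, Matrix.mul_one]
  congr 1
  · symm
    rw [kron_one_transpose, ← Matrix.mul_kronecker_mul, Matrix.one_mul, hV,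
      Matrix.one_kronecker_one]
  · rw [Matrix.mul_sum, Matrix.sum_mul]
    exact Finset.sum_congr rfl fun i _ => (kron_conj (A i) (X i) V).symm

/-- Compression by an isometry preserves membership in the free spectrahedron. -/
private lemma InDA_congr {A : Fin g → Matrix D D ℝ} {X : Fin g → Matrix p p ℝ}
    (hX : InDA A X) (V : Matrix p q ℝ) (hV : Vᵀ * V = 1) :
    InDA A (fun i => Vᵀ * X i * V) := by
  refine ⟨fun i => ?_, ?_⟩
  · have h := (hX.1 i)
    rw [Matrix.IsSymm] at h ⊢
    rw [Matrix.transpose_mul, Matrix.transpose_mul, Matrix.transpose_transpose, h]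
    exact (Matrix.mul_assoc _ _ _).symm
  · rw [LA_congr A X V hV]
    have := hX.2.conjTranspose_mul_mul_same ((1 : Matrix D D ℝ) ⊗ₖ V)
    rwa [Matrix.conjTranspose_eq_transpose_of_trivial] at this

private lemma psd_fromBlocks {M : Matrix p p ℝ} {N : Matrix q q ℝ}
    (hM : M.PosSemidef) (hN : N.PosSemidef) :
    (Matrix.fromBlocks M 0 0 N).PosSemidef := by
  open scoped MatrixOrder Matrix.Norms.L2Operator in
  obtain ⟨B, hB : M = Bᴴ * B⟩ := CStarAlgebra.nonneg_iff_eq_star_mul_self.mp hM.nonneg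
  open scoped MatrixOrder Matrix.Norms.L2Operator in
  obtain ⟨C, hC : N = Cᴴ * C⟩ := CStarAlgebra.nonneg_iff_eq_star_mul_self.mp hN.nonneg
  have : Matrix.fromBlocks M 0 0 N
      = (Matrix.fromBlocks B 0 0 C)ᴴ * Matrix.fromBlocks B 0 0 C := by
    rw [Matrix.fromBlocks_conjTranspose, Matrix.fromBlocks_multiply]
    simp [hB, hC, Matrix.conjTranspose_eq_transpose_of_trivial]
  rw [this]
  exact Matrix.posSemidef_conjTranspose_mul_self _

private lemma LA_fromBlocks (A : Fin g → Matrix D D ℝ) (X : Fin g → Matrix p p ℝ)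
    (X' : Fin g → Matrix q q ℝ) :
    LA A (fun i => Matrix.fromBlocks (X i) 0 0 (X' i))
      = (Matrix.fromBlocks (LA A X) 0 0 (LA A X')).submatrix
          (Equiv.prodSumDistrib D p q) (Equiv.prodSumDistrib D p q) := by
  ext ⟨d₁, a⟩ ⟨d₂, b⟩
  cases a <;> cases b <;>
    simp [LA, Matrix.sub_apply, Matrix.sum_apply, Matrix.one_apply, Prod.ext_iff,
      Equiv.prodSumDistrib, Equiv.sumProdDistrib, Matrix.submatrix_apply]

/-- A direct sum of elements of the free spectrahedron is in the free spectrahedron. -/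
private lemma InDA_fromBlocks {A : Fin g → Matrix D D ℝ} {X : Fin g → Matrix p p ℝ}
    {X' : Fin g → Matrix q q ℝ} (hX : InDA A X) (hX' : InDA A X') :
    InDA A (fun i => Matrix.fromBlocks (X i) 0 0 (X' i)) := by
  refine ⟨fun i => ?_, ?_⟩
  · have h1 := hX.1 i; have h2 := hX'.1 i
    rw [Matrix.IsSymm] at h1 h2 ⊢
    rw [Matrix.fromBlocks_transpose, h1, h2]
    simp
  · rw [LA_fromBlocks]
    exact (psd_fromBlocks hX.2 hX'.2).submatrix _

end auxLemmas

/-! ### Block inclusion matrices -/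

section incl
set_option linter.unusedSectionVars false
variable {ℓ : ℕ} {sz : Fin ℓ → ℕ} {r : Type*} [Fintype r]

/-- The inclusion of the `j`-th summand into the direct sum. -/
def incl (sz : Fin ℓ → ℕ) (j : Fin ℓ) :
    Matrix ((j : Fin ℓ) × Fin (sz j)) (Fin (sz j)) ℝ :=
  Matrix.of fun a b => if a = ⟨j, b⟩ then 1 else 0

lemma mul_incl_apply (P : Matrix r ((j : Fin ℓ) × Fin (sz j)) ℝ) (j : Fin ℓ)
    (x : r) (b : Fin (sz j)) : (P * incl sz j) x b = P x ⟨j, b⟩ := by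
  simp [Matrix.mul_apply, incl, mul_ite, mul_one, mul_zero]

lemma incl_transpose_mul_apply (P : Matrix ((j : Fin ℓ) × Fin (sz j)) r ℝ) (j : Fin ℓ)
    (b : Fin (sz j)) (x : r) : ((incl sz j)ᵀ * P) b x = P ⟨j, b⟩ x := by
  simp [Matrix.mul_apply, incl, ite_mul, one_mul, zero_mul]

lemma incl_tmul (j : Fin ℓ) : (incl sz j)ᵀ * incl sz j = 1 := by
  ext b b'
  rw [incl_transpose_mul_apply]
  simp [incl, Matrix.one_apply]

lemma blockDiagonal'_mul_incl (M : ∀ j : Fin ℓ, Matrix (Fin (sz j)) (Fin (sz j)) ℝ)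
    (j : Fin ℓ) : Matrix.blockDiagonal' M * incl sz j = incl sz j * M j := by
  ext ⟨ja, a2⟩ b
  rw [mul_incl_apply, Matrix.mul_apply]
  by_cases h : ja = j
  · subst h
    rw [Matrix.blockDiagonal'_apply_eq]
    simp [incl, ite_mul, one_mul, zero_mul]
  · rw [Matrix.blockDiagonal'_apply_ne _ _ _ h]
    symm
    apply Finset.sum_eq_zero
    intro c _
    simp only [incl, Matrix.of_apply]
    have : (⟨ja, a2⟩ : (j : Fin ℓ) × Fin (sz j)) ≠ ⟨j, c⟩ := by
      intro hh
      exact h (congrArg Sigma.fst hh)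
    simp [this]

lemma sum_incl_mult : ∑ j, incl sz j * (incl sz j)ᵀ = 1 := by
  ext a b
  rw [Matrix.sum_apply]
  have h1 : ∀ j, (incl sz j * (incl sz j)ᵀ) a b
      = ∑ c : Fin (sz j), (if a = ⟨j, c⟩ then (1:ℝ) else 0) * (if b = ⟨j, c⟩ then 1 else 0) := by
    intro j; simp [Matrix.mul_apply, incl]
  simp_rw [h1]
  rw [Finset.sum_sigma']
  rw [show ((Finset.univ : Finset (Fin ℓ)).sigma fun j => (Finset.univ : Finset (Fin (sz j))))
      = Finset.univ from Finset.univ_sigma_univ]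
  have h2 : ∀ x : (j : Fin ℓ) × Fin (sz j),
      (if a = (⟨x.1, x.2⟩ : (j : Fin ℓ) × Fin (sz j)) then (1:ℝ) else 0)
        * (if b = ⟨x.1, x.2⟩ then 1 else 0)
      = (if a = x then (1:ℝ) else 0) * (if b = x then 1 else 0) := by
    intro x; rw [Sigma.eta]
  simp_rw [h2]
  rw [Finset.sum_eq_single a]
  · simp [Matrix.one_apply, eq_comm]
  · intro c _ hc
    simp [Ne.symm hc]
  · simp

lemma incl_transpose_mul_blockDiagonal'_mul_incl
    (M : ∀ j : Fin ℓ, Matrix (Fin (sz j)) (Fin (sz j)) ℝ) (j : Fin ℓ) :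
    (incl sz j)ᵀ * Matrix.blockDiagonal' M * incl sz j = M j := by
  rw [Matrix.mul_assoc, blockDiagonal'_mul_incl, ← Matrix.mul_assoc, incl_tmul, Matrix.one_mul]

end incl

/-! ### The corner inclusion `ℝ^n → ℝ^{n+k}` -/

section inclE
set_option linter.unusedSectionVars false
variable {n k : ℕ} {r : Type*} [Fintype r]

/-- The inclusion of `ℝ^n` as the first `n` coordinates of `ℝ^{n+k}`. -/
def inclE (n k : ℕ) : Matrix (Fin (n + k)) (Fin n) ℝ :=
  Matrix.of fun a b => if a = Fin.castAdd k b then 1 else 0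

lemma mul_inclE_apply (P : Matrix r (Fin (n + k)) ℝ) (x : r) (b : Fin n) :
    (P * inclE n k) x b = P x (Fin.castAdd k b) := by
  simp [Matrix.mul_apply, inclE, mul_ite, mul_one, mul_zero]

lemma inclE_transpose_mul_apply (P : Matrix (Fin (n + k)) r ℝ) (b : Fin n) (x : r) :
    ((inclE n k)ᵀ * P) b x = P (Fin.castAdd k b) x := by
  simp [Matrix.mul_apply, inclE, ite_mul, one_mul, zero_mul]

lemma inclE_tmul : (inclE n k)ᵀ * inclE n k = 1 := by
  ext b b'
  rw [inclE_transpose_mul_apply]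
  simp [inclE, Matrix.one_apply, Fin.castAdd_inj]

lemma conj_inclE (M : Matrix (Fin (n + k)) (Fin (n + k)) ℝ) :
    (inclE n k)ᵀ * M * inclE n k = M.submatrix (Fin.castAdd k) (Fin.castAdd k) := by
  ext b b'
  rw [mul_inclE_apply, inclE_transpose_mul_apply, Matrix.submatrix_apply]

end inclE

/-! ### Block computations for the dilation argument -/

section blocks
set_option linter.unusedSectionVars false
set_option maxHeartbeats 1000000
variable {S p m' : Type*} [Fintype S] [Fintype p] [Fintype m']
  [DecidableEq S] [DecidableEq p] [DecidableEq m']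

private lemma fromBlocks_mul_fromRows' {l o pp : Type*}
    (A : Matrix l S ℝ) (B : Matrix l p ℝ) (C : Matrix o S ℝ) (D : Matrix o p ℝ)
    (E : Matrix S pp ℝ) (F : Matrix p pp ℝ) :
    Matrix.fromBlocks A B C D * Matrix.fromRows E F
      = Matrix.fromRows (A * E + B * F) (C * E + D * F) := by
  rw [← Matrix.fromRows_fromCols_eq_fromBlocks, Matrix.fromRows_mul,
    Matrix.fromCols_mul_fromRows, Matrix.fromCols_mul_fromRows]

private lemma key_alg (BD P K : Matrix S S ℝ) (hBDP : BD * P = K) (hPBD : P * BD = K)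
    (hPK : P * K = K) : (1 - P) * (BD * (1 - P)) + K = BD := by
  rw [Matrix.mul_sub, Matrix.mul_one, hBDP, Matrix.sub_mul, Matrix.one_mul, Matrix.mul_sub,
    hPBD, hPK, sub_self, sub_zero]
  abel

private lemma isoV_transpose (ι : Matrix S p ℝ) :
    (Matrix.fromBlocks (1 - ι * ιᵀ) 0 (Matrix.fromRows ιᵀ 0)
        (Matrix.fromRows 0 (1 : Matrix m' m' ℝ)))ᵀ
      = Matrix.fromBlocks (1 - ι * ιᵀ) (Matrix.fromCols ι 0) 0
          (Matrix.fromCols 0 (1 : Matrix m' m' ℝ)) := by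
  rw [Matrix.fromBlocks_transpose, Matrix.transpose_fromRows, Matrix.transpose_fromRows]
  simp [Matrix.transpose_sub, Matrix.transpose_mul]

private lemma isoV_tmul (ι : Matrix S p ℝ) (hι : ιᵀ * ι = 1) :
    (Matrix.fromBlocks (1 - ι * ιᵀ) 0 (Matrix.fromRows ιᵀ 0)
        (Matrix.fromRows 0 (1 : Matrix m' m' ℝ)))ᵀ *
      Matrix.fromBlocks (1 - ι * ιᵀ) 0 (Matrix.fromRows ιᵀ 0)
        (Matrix.fromRows 0 (1 : Matrix m' m' ℝ)) = 1 := by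
  have hPP : (ι * ιᵀ) * (ι * ιᵀ) = ι * ιᵀ := by
    rw [Matrix.mul_assoc, ← Matrix.mul_assoc ιᵀ, hι, Matrix.one_mul]
  rw [isoV_transpose, Matrix.fromBlocks_multiply]
  simp only [Matrix.fromCols_mul_fromRows, Matrix.mul_zero, Matrix.zero_mul,
    Matrix.mul_one, Matrix.one_mul, add_zero, zero_add]
  have hTL : (1 - ι * ιᵀ) * (1 - ι * ιᵀ) + ι * ιᵀ = (1 : Matrix S S ℝ) := by
    rw [Matrix.sub_mul, Matrix.one_mul, Matrix.mul_sub, Matrix.mul_one, hPP]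
    abel
  rw [hTL, Matrix.fromBlocks_one]

private lemma isoV_conj (ι : Matrix S p ℝ) (hι : ιᵀ * ι = 1)
    (BD : Matrix S S ℝ) (Zj : Matrix p p ℝ) (β : Matrix p m' ℝ) (γ : Matrix m' m' ℝ)
    (hBDι : BD * ι = ι * Zj) (hιBD : ιᵀ * BD = Zj * ιᵀ) :
    (Matrix.fromBlocks (1 - ι * ιᵀ) 0 (Matrix.fromRows ιᵀ 0)
        (Matrix.fromRows 0 (1 : Matrix m' m' ℝ)))ᵀ *
      (Matrix.fromBlocks BD 0 0 (Matrix.fromBlocks Zj β βᵀ γ) *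
        Matrix.fromBlocks (1 - ι * ιᵀ) 0 (Matrix.fromRows ιᵀ 0)
          (Matrix.fromRows 0 (1 : Matrix m' m' ℝ)))
      = Matrix.fromBlocks BD (ι * β) (ι * β)ᵀ γ := by
  rw [Matrix.fromBlocks_multiply]
  simp only [fromBlocks_mul_fromRows', Matrix.mul_zero, Matrix.zero_mul, Matrix.mul_one,
    Matrix.one_mul, add_zero, zero_add]
  rw [isoV_transpose, Matrix.fromBlocks_multiply]
  simp only [Matrix.fromCols_mul_fromRows, Matrix.mul_zero, Matrix.zero_mul, Matrix.mul_one,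
    Matrix.one_mul, add_zero, zero_add]
  have hBDP : BD * (ι * ιᵀ) = ι * (Zj * ιᵀ) := by
    rw [← Matrix.mul_assoc, hBDι, Matrix.mul_assoc]
  have hPBD : (ι * ιᵀ) * BD = ι * (Zj * ιᵀ) := by
    rw [Matrix.mul_assoc, hιBD]
  have hPK : (ι * ιᵀ) * (ι * (Zj * ιᵀ)) = ι * (Zj * ιᵀ) := by
    rw [Matrix.mul_assoc, ← Matrix.mul_assoc ιᵀ, hι, Matrix.one_mul]
  rw [key_alg BD (ι * ιᵀ) (ι * (Zj * ιᵀ)) hBDP hPBD hPK, Matrix.transpose_mul]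

private lemma isoQ_tmul {nk : Type*} [Fintype nk] [DecidableEq nk]
    (U : Matrix nk S ℝ) (hU2 : U * Uᵀ = 1) :
    (Matrix.fromBlocks Uᵀ 0 0 (1 : Matrix m' m' ℝ))ᵀ *
      Matrix.fromBlocks Uᵀ 0 0 (1 : Matrix m' m' ℝ) = 1 := by
  rw [Matrix.fromBlocks_transpose, Matrix.transpose_transpose, Matrix.fromBlocks_multiply]
  simp only [Matrix.transpose_zero, Matrix.transpose_one, Matrix.mul_zero, Matrix.zero_mul,
    Matrix.mul_one, Matrix.one_mul, add_zero, zero_add, hU2]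
  exact Matrix.fromBlocks_one

private lemma isoQ_conj {nk : Type*} [Fintype nk] [DecidableEq nk]
    (U : Matrix nk S ℝ) (BD : Matrix S S ℝ) (B : Matrix S m' ℝ) (γ : Matrix m' m' ℝ) :
    (Matrix.fromBlocks Uᵀ 0 0 (1 : Matrix m' m' ℝ))ᵀ *
      (Matrix.fromBlocks BD B Bᵀ γ * Matrix.fromBlocks Uᵀ 0 0 (1 : Matrix m' m' ℝ))
      = Matrix.fromBlocks (U * (BD * Uᵀ)) (U * B) (U * B)ᵀ γ := by
  rw [Matrix.fromBlocks_transpose, Matrix.transpose_transpose, Matrix.fromBlocks_multiply,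
    Matrix.fromBlocks_multiply]
  simp only [Matrix.transpose_zero, Matrix.transpose_one, Matrix.mul_zero, Matrix.zero_mul,
    Matrix.mul_one, Matrix.one_mul, add_zero, zero_add, Matrix.transpose_mul]

end blocks


/-- if `Y ∈ D_A(n+k)` is an Arveson extreme dilation of `X ∈ D_A(n)` and
`UᵀYU = ⊕_j Z^j` with each `Z^j` irreducible, then each `Z^j` is a free extreme point
(irreducible and Arveson extreme), and `X` is a matrix convex combination of the `Z^j`
whose sizes sum to `n + k`. -/
theorem arveson_dilation_free_extreme_decomposition {g d n k ℓ : ℕ}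
    (A : Fin g → Matrix (Fin d) (Fin d) ℝ) (hA : ∀ i, (A i).IsSymm)
    (X : Fin g → Matrix (Fin n) (Fin n) ℝ) (hX : InDA A X)
    (Y : Fin g → Matrix (Fin (n + k)) (Fin (n + k)) ℝ)
    (hYArv : IsArvExt A Y)
    (hdil : ∀ i, (Y i).submatrix (Fin.castAdd k) (Fin.castAdd k) = X i)
    (sz : Fin ℓ → ℕ)
    (Z : ∀ j : Fin ℓ, Fin g → Matrix (Fin (sz j)) (Fin (sz j)) ℝ)
    (U : Matrix (Fin (n + k)) ((j : Fin ℓ) × Fin (sz j)) ℝ)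
    (hU1 : Uᵀ * U = 1) (hU2 : U * Uᵀ = 1)
    (hUY : ∀ i, Uᵀ * Y i * U = Matrix.blockDiagonal' (fun j => Z j i))
    (hZirr : ∀ j, IsIrred (Z j)) :
    (∀ j, IsIrred (Z j) ∧ IsArvExt A (Z j)) ∧
    ∃ V : ∀ j : Fin ℓ, Matrix (Fin (sz j)) (Fin n) ℝ,
      (∀ i, X i = ∑ j, (V j)ᵀ * Z j i * V j) ∧
      (∑ j, (V j)ᵀ * V j = 1) ∧
      (∑ j, sz j = n + k) := by
  classical
  -- the block-diagonal tuple is in `D_A`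
  have hBDin : InDA A (fun i => Matrix.blockDiagonal' (fun j' => Z j' i)) := by
    have h := InDA_congr hYArv.1 U hU1
    have he : (fun i => Uᵀ * Y i * U) = fun i => Matrix.blockDiagonal' (fun j' => Z j' i) :=
      funext hUY
    rwa [he] at h
  -- each `Z j` is in `D_A`
  have hZin : ∀ j, InDA A (Z j) := by
    intro j
    have h := InDA_congr hBDin (incl sz j) (incl_tmul j)
    have he : (fun i => (incl sz j)ᵀ * Matrix.blockDiagonal' (fun j' => Z j' i) * incl sz j)
        = Z j := by
      funext i
      exact incl_transpose_mul_blockDiagonal'_mul_incl _ j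
    rwa [he] at h
  have hZsymm : ∀ j i, (Z j i).IsSymm := fun j => (hZin j).1
  have hBDsymm : ∀ i, (Matrix.blockDiagonal' (fun j' => Z j' i)).IsSymm := hBDin.1
  have hBDι : ∀ j i, Matrix.blockDiagonal' (fun j' => Z j' i) * incl sz j
      = incl sz j * Z j i := fun j i => blockDiagonal'_mul_incl _ j
  have hιBD : ∀ j i, (incl sz j)ᵀ * Matrix.blockDiagonal' (fun j' => Z j' i)
      = Z j i * (incl sz j)ᵀ := by
    intro j i
    have h := congrArg Matrix.transpose (hBDι j i)
    rw [Matrix.transpose_mul, Matrix.transpose_mul, (hBDsymm i).eq, (hZsymm j i).eq] at h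
    exact h
  have hYBD : ∀ i, U * (Matrix.blockDiagonal' (fun j' => Z j' i) * Uᵀ) = Y i := by
    intro i
    calc U * (Matrix.blockDiagonal' (fun j' => Z j' i) * Uᵀ)
        = U * ((Uᵀ * Y i * U) * Uᵀ) := by rw [hUY]
      _ = (U * Uᵀ) * Y i * (U * Uᵀ) := by simp only [Matrix.mul_assoc]
      _ = Y i := by rw [hU2, Matrix.one_mul, Matrix.mul_one]
  -- each `Z j` is Arveson extreme
  have hZarv : ∀ j, IsArvExt A (Z j) := by
    intro j
    refine ⟨hZin j, ?_⟩
    intro m β γ hdilZ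
    -- the direct sum of the block diagonal and the dilation of `Z j`
    have hMin : InDA A (fun i =>
        Matrix.fromBlocks (Matrix.blockDiagonal' (fun j' => Z j' i)) 0 0
          (Matrix.fromBlocks (Z j i) (β i) (β i)ᵀ (γ i))) :=
      InDA_fromBlocks hBDin hdilZ
    -- compress by the isometry V
    have hDin : InDA A (fun i =>
        Matrix.fromBlocks (Matrix.blockDiagonal' (fun j' => Z j' i))
          (incl sz j * β i) (incl sz j * β i)ᵀ (γ i)) := by
      have h := InDA_congr hMin
        (Matrix.fromBlocks (1 - incl sz j * (incl sz j)ᵀ) 0 (Matrix.fromRows (incl sz j)ᵀ 0)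
          (Matrix.fromRows 0 (1 : Matrix (Fin m) (Fin m) ℝ)))
        (isoV_tmul (incl sz j) (incl_tmul j))
      have he : (fun i =>
          (Matrix.fromBlocks (1 - incl sz j * (incl sz j)ᵀ) 0 (Matrix.fromRows (incl sz j)ᵀ 0)
            (Matrix.fromRows 0 (1 : Matrix (Fin m) (Fin m) ℝ)))ᵀ *
          (Matrix.fromBlocks (Matrix.blockDiagonal' (fun j' => Z j' i)) 0 0
            (Matrix.fromBlocks (Z j i) (β i) (β i)ᵀ (γ i))) *
          (Matrix.fromBlocks (1 - incl sz j * (incl sz j)ᵀ) 0 (Matrix.fromRows (incl sz j)ᵀ 0)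
            (Matrix.fromRows 0 (1 : Matrix (Fin m) (Fin m) ℝ))))
          = fun i => Matrix.fromBlocks (Matrix.blockDiagonal' (fun j' => Z j' i))
              (incl sz j * β i) (incl sz j * β i)ᵀ (γ i) := by
        funext i
        rw [Matrix.mul_assoc]
        exact isoV_conj (incl sz j) (incl_tmul j) _ (Z j i) (β i) (γ i) (hBDι j i) (hιBD j i)
      rwa [he] at h
    -- conjugate by Q to obtain a dilation of Y
    have hYdil : InDA A (fun i =>
        Matrix.fromBlocks (Y i) (U * (incl sz j * β i)) (U * (incl sz j * β i))ᵀ (γ i)) := by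
      have h := InDA_congr hDin
        (Matrix.fromBlocks Uᵀ 0 0 (1 : Matrix (Fin m) (Fin m) ℝ)) (isoQ_tmul U hU2)
      have he : (fun i =>
          (Matrix.fromBlocks Uᵀ 0 0 (1 : Matrix (Fin m) (Fin m) ℝ))ᵀ *
          (Matrix.fromBlocks (Matrix.blockDiagonal' (fun j' => Z j' i))
            (incl sz j * β i) (incl sz j * β i)ᵀ (γ i)) *
          (Matrix.fromBlocks Uᵀ 0 0 (1 : Matrix (Fin m) (Fin m) ℝ)))
          = fun i => Matrix.fromBlocks (Y i) (U * (incl sz j * β i))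
              (U * (incl sz j * β i))ᵀ (γ i) := by
        funext i
        rw [Matrix.mul_assoc, isoQ_conj U _ (incl sz j * β i) (γ i), hYBD i]
      rwa [he] at h
    -- apply Arveson extremality of Y
    have hB0 := hYArv.2 m (fun i => U * (incl sz j * β i)) γ hYdil
    funext i
    have hBi : U * (incl sz j * β i) = 0 := congrFun hB0 i
    have h1 : Uᵀ * (U * (incl sz j * β i)) = incl sz j * β i := by
      rw [← Matrix.mul_assoc, hU1, Matrix.one_mul]
    have h2 : incl sz j * β i = 0 := by
      rw [← h1, hBi, Matrix.mul_zero]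
    have h3 : (incl sz j)ᵀ * (incl sz j * β i) = β i := by
      rw [← Matrix.mul_assoc, incl_tmul, Matrix.one_mul]
    rw [← h3, h2, Matrix.mul_zero]
    rfl
  refine ⟨fun j => ⟨hZirr j, hZarv j⟩, ?_⟩
  -- the matrix convex combination
  refine ⟨fun j => (incl sz j)ᵀ * (Uᵀ * inclE n k), ?_, ?_, ?_⟩
  · intro i
    have hterm : ∀ j, ((incl sz j)ᵀ * (Uᵀ * inclE n k))ᵀ * Z j i
          * ((incl sz j)ᵀ * (Uᵀ * inclE n k))
        = (inclE n k)ᵀ * (U * (Matrix.blockDiagonal' (fun j' => Z j' i) *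
            ((incl sz j * (incl sz j)ᵀ) * (Uᵀ * inclE n k)))) := by
      intro j
      calc ((incl sz j)ᵀ * (Uᵀ * inclE n k))ᵀ * Z j i * ((incl sz j)ᵀ * (Uᵀ * inclE n k))
          = (inclE n k)ᵀ * (U * ((incl sz j * Z j i) *
              ((incl sz j)ᵀ * (Uᵀ * inclE n k)))) := by
            simp only [Matrix.transpose_mul, Matrix.transpose_transpose, Matrix.mul_assoc]
        _ = (inclE n k)ᵀ * (U * ((Matrix.blockDiagonal' (fun j' => Z j' i) * incl sz j) *
              ((incl sz j)ᵀ * (Uᵀ * inclE n k)))) := by rw [hBDι j i]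
        _ = (inclE n k)ᵀ * (U * (Matrix.blockDiagonal' (fun j' => Z j' i) *
              ((incl sz j * (incl sz j)ᵀ) * (Uᵀ * inclE n k)))) := by
            simp only [Matrix.mul_assoc]
    rw [Finset.sum_congr rfl (fun j _ => hterm j)]
    rw [← Matrix.mul_sum, ← Matrix.mul_sum, ← Matrix.mul_sum, ← Matrix.sum_mul, sum_incl_mult,
      Matrix.one_mul]
    calc X i = (inclE n k)ᵀ * Y i * inclE n k := by rw [conj_inclE, hdil]
      _ = (inclE n k)ᵀ * (U * (Matrix.blockDiagonal' (fun j' => Z j' i) * (Uᵀ * inclE n k))) := by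
          rw [← hYBD i]
          simp only [Matrix.mul_assoc]
  · have hterm : ∀ j, ((incl sz j)ᵀ * (Uᵀ * inclE n k))ᵀ * ((incl sz j)ᵀ * (Uᵀ * inclE n k))
        = (inclE n k)ᵀ * (U * ((incl sz j * (incl sz j)ᵀ) * (Uᵀ * inclE n k))) := by
      intro j
      simp only [Matrix.transpose_mul, Matrix.transpose_transpose, Matrix.mul_assoc]
    rw [Finset.sum_congr rfl (fun j _ => hterm j)]
    rw [← Matrix.mul_sum, ← Matrix.mul_sum, ← Matrix.sum_mul, sum_incl_mult, Matrix.one_mul]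
    rw [← Matrix.mul_assoc U Uᵀ (inclE n k), hU2, Matrix.one_mul, inclE_tmul]
  · have hcard : Fintype.card ((j : Fin ℓ) × Fin (sz j)) = Fintype.card (Fin (n + k)) := by
      have e : (((j : Fin ℓ) × Fin (sz j)) → ℝ) ≃ₗ[ℝ] (Fin (n + k) → ℝ) :=
        LinearEquiv.ofLinear (Matrix.mulVecLin U) (Matrix.mulVecLin Uᵀ)
          (by rw [← Matrix.mulVecLin_mul, hU2, Matrix.mulVecLin_one])
          (by rw [← Matrix.mulVecLin_mul, hU1, Matrix.mulVecLin_one])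
      have h := e.finrank_eq
      rwa [Module.finrank_fintype_fun_eq_card, Module.finrank_fintype_fun_eq_card] at h
    rw [Fintype.card_sigma] at hcard
    simpa using hcard
end
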